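/- Let g ∈ ℝ and let u : S → [0,∞] satisfy, for every i ∈ S with i ≠ z, the supersolution inequality u(i) ≥ Q(i,g)·( q(z|i) + Σ_{j ∈ S∖{i,z}} u(j)·q(j|i) ) in [0,∞] (convention 0·∞ = 0), where Q(i,g) := ∫₀^∞ exp( (λ(c(i) − g) + q(i|i))·s ) ds ∈ (0,∞]. Then u(i) ≥ E_i[ W_g · 1_{{N < ∞}} ] for every i ∈ S with i ≠ z. (Verification inequality (3-8)/(s) in the proof of Theorem 3.1(d): supersolutions of the first-passage equations dominate the first-passage exponential value.) -/

import Mathlib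

open MeasureTheory Filter Set
open scoped ENNReal

noncomputable section

namespace RiskCTMDP10

variable {S : Type*} [Fintype S] [DecidableEq S] [MeasurableSpace S]
  [MeasurableSingletonClass S]

/-- Exponential distribution with rate `r`, as a measure on `ℝ` supported on `(0,∞)`. -/
def expM (r : ℝ) : Measure ℝ :=
  (volume.restrict (Ioi (0 : ℝ))).withDensity fun t => ENNReal.ofReal (r * Real.exp (-(r * t)))

/-- Law of a coordinate `(X_m, θ_{m+1})` of the jump chain when `X_m = j` is deterministic:
the state is `j` and the holding time is exponential with rate `−q(j|j)`. -/
def initM (q : S → S → ℝ) (j : S) : Measure (S × ℝ) :=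
  (expM (-(q j j))).map fun t => (j, t)

/-- One-step transition law of the jump chain out of state `x`: jump to `j ≠ x` with
probability `−q(j|x)/q(x|x)`, then hold an independent `Exp(−q(j|j))` time. -/
def stepM (q : S → S → ℝ) (x : S) : Measure (S × ℝ) :=
  ∑ j ∈ Finset.univ.erase x, ENNReal.ofReal (q j x / -(q x x)) • initM q j

/-- `P` is the family of laws (as given by the Ionescu–Tulcea construction) of the jump chain
`((X_m)_{m≥0}, (θ_m)_{m≥1})` with transition rates `q`, coordinate `m` being `(X_m, θ_{m+1})`:
each `P i` is a probability measure, the zeroth coordinate has law `initM q i`, and the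
(one-step) Markov property with transition kernel `stepM q` holds. -/
def IsJumpChainLaw (q : S → S → ℝ) (P : S → Measure (ℕ → S × ℝ)) : Prop :=
  (∀ i, IsProbabilityMeasure (P i)) ∧
  (∀ i, (P i).map (fun ω => ω 0) = initM q i) ∧
  (∀ (i : S) (m : ℕ) (φ : (ℕ → S × ℝ) → ℝ≥0∞) (ψ : S × ℝ → ℝ≥0∞),
    Measurable φ → Measurable ψ →
    (∀ ω ω' : ℕ → S × ℝ, (∀ k ≤ m, ω k = ω' k) → φ ω = φ ω') →
    ∫⁻ ω, φ ω * ψ (ω (m + 1)) ∂(P i) =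
      ∫⁻ ω, φ ω * ∫⁻ y, ψ y ∂(stepM q (ω m).1) ∂(P i))

open Classical in
/-- The first-passage exponential functional
`W_g = exp(λ Σ_{m=0}^{N−1} (c(X_m) − g) θ_{m+1})` on `{N < ∞}` (where
`N = inf{m ≥ 1 : X_m = z}`), and the corresponding `limsup` on `{N = ∞}`, valued in `[0,∞]`. -/
def W (z : S) (lam : ℝ) (c : S → ℝ) (g : ℝ) (ω : ℕ → S × ℝ) : ℝ≥0∞ :=
  if h : ∃ m, 1 ≤ m ∧ (ω m).1 = z then
    ENNReal.ofReal (Real.exp (lam *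
      ∑ m ∈ Finset.range (Nat.find h), (c (ω m).1 - g) * (ω m).2))
  else
    limsup (fun n => ENNReal.ofReal (Real.exp (lam *
      ∑ m ∈ Finset.range n, (c (ω m).1 - g) * (ω m).2))) atTop

/-- `Q(i,g) = ∫₀^∞ exp((λ(c(i) − g) + q(i|i)) s) ds ∈ (0,∞]`. -/
def Qint (lam : ℝ) (c : S → ℝ) (q : S → S → ℝ) (i : S) (g : ℝ) : ℝ≥0∞ :=
  ∫⁻ s in Ioi (0 : ℝ), ENNReal.ofReal (Real.exp ((lam * (c i - g) + q i i) * s))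

/-! ### Auxiliary lemmas -/

lemma expM_lintegral (r : ℝ) {f : ℝ → ℝ≥0∞} (hf : Measurable f) :
    ∫⁻ t, f t ∂(expM r)
      = ∫⁻ t in Ioi (0:ℝ), ENNReal.ofReal (r * Real.exp (-(r * t))) * f t := by
  rw [expM, lintegral_withDensity_eq_lintegral_mul _ (by fun_prop) hf]
  rfl

lemma expM_exp {r : ℝ} (hr : 0 < r) (a : ℝ) :
    ∫⁻ t, ENNReal.ofReal (Real.exp (a * t)) ∂(expM r)
      = ENNReal.ofReal r * ∫⁻ t in Ioi (0:ℝ), ENNReal.ofReal (Real.exp ((a - r) * t)) := by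
  rw [expM_lintegral r (by fun_prop), ← lintegral_const_mul _ (by fun_prop)]
  refine lintegral_congr fun t => ?_
  rw [← ENNReal.ofReal_mul hr.le, ← ENNReal.ofReal_mul (by positivity)]
  congr 1
  rw [mul_assoc, ← Real.exp_add]
  congr 1
  ring

lemma expM_one {r : ℝ} (hr : 0 < r) : ∫⁻ _t, (1:ℝ≥0∞) ∂(expM r) = 1 := by
  have h0 : ∫⁻ t, ENNReal.ofReal (Real.exp ((0:ℝ) * t)) ∂(expM r)
      = ∫⁻ _t, (1:ℝ≥0∞) ∂(expM r) := by
    refine lintegral_congr fun t => ?_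
    simp
  rw [← h0, expM_exp hr 0]
  have hint : IntegrableOn (fun t : ℝ => Real.exp ((0 - r) * t)) (Ioi (0:ℝ)) := by
    simpa [zero_sub] using exp_neg_integrableOn_Ioi 0 hr
  rw [← ofReal_integral_eq_lintegral_ofReal hint
      (Filter.Eventually.of_forall fun t => (Real.exp_pos _).le)]
  have : (∫ t in Ioi (0:ℝ), Real.exp ((0 - r) * t)) = r⁻¹ := by
    have h := integral_comp_mul_left_Ioi (fun y => Real.exp (-y)) 0 hr
    simp only [mul_zero] at h
    calc (∫ t in Ioi (0:ℝ), Real.exp ((0 - r) * t))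
        = ∫ t in Ioi (0:ℝ), Real.exp (-(r * t)) := by
          refine setIntegral_congr_fun measurableSet_Ioi fun t _ => ?_
          ring_nf
      _ = r⁻¹ • ∫ t in Ioi (0:ℝ), Real.exp (-t) := h
      _ = r⁻¹ := by rw [integral_exp_neg_Ioi_zero]; simp
  rw [this, ← ENNReal.ofReal_mul hr.le, mul_inv_cancel₀ hr.ne', ENNReal.ofReal_one]

lemma initM_lintegral (q : S → S → ℝ) (j : S) {f : S × ℝ → ℝ≥0∞} (hf : Measurable f) :
    ∫⁻ y, f y ∂(initM q j) = ∫⁻ t, f (j, t) ∂(expM (-(q j j))) :=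
  lintegral_map hf (measurable_const.prodMk measurable_id)

lemma stepM_lintegral (q : S → S → ℝ) (x : S) {f : S × ℝ → ℝ≥0∞} (hf : Measurable f) :
    ∫⁻ y, f y ∂(stepM q x)
      = ∑ j ∈ Finset.univ.erase x, ENNReal.ofReal (q j x / -(q x x)) *
          ∫⁻ t, f (j, t) ∂(expM (-(q j j))) := by
  rw [stepM, lintegral_finset_sum_measure]
  exact Finset.sum_congr rfl fun j _ => by
    rw [lintegral_smul_measure, initM_lintegral q j hf, smul_eq_mul]

/-- **Verification inequality (3-8)/(s)** ... -/
theorem stmt10 {S : Type*} [Fintype S] [DecidableEq S] [Nonempty S] [MeasurableSpace S]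
    [MeasurableSingletonClass S]
    (z : S) (lam : ℝ) (hlam : 0 < lam) (q : S → S → ℝ) (c : S → ℝ)
    (hq_nonneg : ∀ i j : S, j ≠ i → 0 ≤ q j i)
    (hq_sum : ∀ i : S, ∑ j, q j i = 0)
    (hq_diag : ∀ i : S, q i i < 0)
    (P : S → Measure (ℕ → S × ℝ)) (hP : IsJumpChainLaw q P)
    (g : ℝ) (u : S → ℝ≥0∞)
    (hsuper : ∀ i : S, i ≠ z →
      Qint lam c q i g *
          (ENNReal.ofReal (q z i) +
            ∑ j ∈ (Finset.univ.erase i).erase z, u j * ENNReal.ofReal (q j i)) ≤ u i) :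
    ∀ i : S, i ≠ z →
      (∫⁻ ω, {ω' : ℕ → S × ℝ | ∃ m, 1 ≤ m ∧ (ω' m).1 = z}.indicator (W z lam c g) ω ∂(P i))
        ≤ u i := by
  intro i hi
  have hqpos : ∀ x : S, (0:ℝ) < -(q x x) := fun x => neg_pos.2 (hq_diag x)
  -- abbreviations
  set η : S × ℝ → ℝ≥0∞ :=
    fun y => if y.1 = z then 0 else ENNReal.ofReal (Real.exp (lam * (c y.1 - g) * y.2)) with hη
  set χ : S × ℝ → ℝ≥0∞ := fun y => if y.1 = z then 1 else 0 with hχ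
  set Φ : ℕ → (ℕ → S × ℝ) → ℝ≥0∞ :=
    fun n ω => ∏ m ∈ Finset.range n, η (ω m) with hΦ
  set B : S → ℝ≥0∞ := fun x => ENNReal.ofReal (q z x) +
      ∑ j ∈ (Finset.univ.erase x).erase z, u j * ENNReal.ofReal (q j x) with hB
  set v : S → ℝ≥0∞ := fun x => B x / ENNReal.ofReal (-(q x x)) with hv
  set ψ : S × ℝ → ℝ≥0∞ := fun y => χ y + η y * v y.1 with hψ
  -- measurability
  have hSz : MeasurableSet {y : S × ℝ | y.1 = z} :=
    measurable_fst (measurableSet_singleton z)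
  have hηm : Measurable η := by
    refine Measurable.ite hSz measurable_const ?_
    fun_prop
  have hχm : Measurable χ := Measurable.ite hSz measurable_const measurable_const
  have hvm : Measurable fun y : S × ℝ => v y.1 :=
    show Measurable (v ∘ Prod.fst) from Measurable.of_discrete.comp measurable_fst
  have hψm : Measurable ψ := hχm.add (hηm.mul hvm)
  have hΦm : ∀ n, Measurable (Φ n) := fun n =>
    Finset.measurable_prod _ fun m _ => hηm.comp (measurable_pi_apply m)
  -- the expM-integrals
  have hexp1 : ∀ j : S, ∫⁻ t, (1:ℝ≥0∞) ∂(expM (-(q j j))) = 1 := fun j => expM_one (hqpos j)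
  have hexpQ : ∀ j : S, ∫⁻ t, ENNReal.ofReal (Real.exp (lam * (c j - g) * t))
      ∂(expM (-(q j j))) = ENNReal.ofReal (-(q j j)) * Qint lam c q j g := by
    intro j
    rw [expM_exp (hqpos j) (lam * (c j - g))]
    congr 1
    rw [Qint]
    refine lintegral_congr fun s => ?_
    congr 2
    ring
  -- the one-step bound on ∫ ψ d stepM x for x ≠ z
  have hQB : ∀ j : S, j ≠ z →
      ENNReal.ofReal (-(q j j)) * Qint lam c q j g * v j ≤ u j := by
    intro j hj
    have h1 : ENNReal.ofReal (-(q j j)) * Qint lam c q j g * v j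
        = Qint lam c q j g * (ENNReal.ofReal (-(q j j)) * (B j / ENNReal.ofReal (-(q j j)))) := by
      rw [hv]; ring
    rw [h1, ENNReal.mul_div_cancel (by simpa using (hqpos j)) ENNReal.ofReal_ne_top]
    exact hsuper j hj
  have hTψ : ∀ x : S, x ≠ z → (∫⁻ y, ψ y ∂(stepM q x)) ≤ v x := by
    intro x hx
    rw [stepM_lintegral q x hψm]
    have hzmem : z ∈ Finset.univ.erase x :=
      Finset.mem_erase.2 ⟨Ne.symm hx, Finset.mem_univ z⟩
    rw [← Finset.add_sum_erase _ _ hzmem]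
    have hzterm : (∫⁻ t, ψ (z, t) ∂(expM (-(q z z)))) = 1 := by
      have : ∀ t : ℝ, ψ (z, t) = 1 := by
        intro t; simp [hψ, hχ, hη]
      simp only [this]
      exact hexp1 z
    have hjterm : ∀ j : S, j ∈ (Finset.univ.erase x).erase z →
        (∫⁻ t, ψ (j, t) ∂(expM (-(q j j))))
          = ENNReal.ofReal (-(q j j)) * Qint lam c q j g * v j := by
      intro j hj
      have hjz : j ≠ z := (Finset.mem_erase.1 hj).1
      have : ∀ t : ℝ, ψ (j, t) = ENNReal.ofReal (Real.exp (lam * (c j - g) * t)) * v j := by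
        intro t; simp [hψ, hχ, hη, hjz]
      simp only [this]
      rw [lintegral_mul_const _ (by fun_prop), hexpQ j]
    calc ENNReal.ofReal (q z x / -(q x x)) * (∫⁻ t, ψ (z, t) ∂(expM (-(q z z))))
          + ∑ j ∈ (Finset.univ.erase x).erase z, ENNReal.ofReal (q j x / -(q x x)) *
            ∫⁻ t, ψ (j, t) ∂(expM (-(q j j)))
        ≤ ENNReal.ofReal (q z x / -(q x x))
          + ∑ j ∈ (Finset.univ.erase x).erase z, ENNReal.ofReal (q j x / -(q x x)) * u j := by
          refine add_le_add ?_ ?_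
          · rw [hzterm, mul_one]
          · refine Finset.sum_le_sum fun j hj => ?_
            rw [hjterm j hj]
            exact mul_le_mul_right (hQB j (Finset.mem_erase.1 hj).1) _
      _ = v x := by
          rw [hv, hB]
          have hdiv : ∀ j : S, ENNReal.ofReal (q j x / -(q x x))
              = ENNReal.ofReal (q j x) * (ENNReal.ofReal (-(q x x)))⁻¹ := by
            intro j
            rw [ENNReal.ofReal_div_of_pos (hqpos x), ENNReal.div_eq_inv_mul, mul_comm]
          simp only [hdiv]
          rw [ENNReal.div_eq_inv_mul, mul_add, Finset.mul_sum]
          congr 1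
          · rw [mul_comm]
          · refine Finset.sum_congr rfl fun j hj => ?_
            ring
  -- the quantities a and R
  set a : ℕ → ℝ≥0∞ := fun n => ∫⁻ ω, Φ n ω * χ (ω n) ∂(P i) with ha
  set R : ℕ → ℝ≥0∞ := fun n => ∫⁻ ω, Φ (n+1) ω * v ((ω n).1) ∂(P i) with hR
  -- the supermartingale step
  have hstep : ∀ n, a (n+1) + R (n+1) ≤ R n := by
    intro n
    have hdep : ∀ ω ω' : ℕ → S × ℝ, (∀ k ≤ n, ω k = ω' k) → Φ (n+1) ω = Φ (n+1) ω' := by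
      intro ω ω' h
      exact Finset.prod_congr rfl fun m hm => by
        rw [h m (Nat.lt_succ_iff.mp (Finset.mem_range.1 hm))]
    have hmk := hP.2.2 i n (Φ (n+1)) ψ (hΦm (n+1)) hψm hdep
    have hlhs : ∫⁻ ω, Φ (n+1) ω * ψ (ω (n+1)) ∂(P i) = a (n+1) + R (n+1) := by
      have hpt : ∀ ω : ℕ → S × ℝ, Φ (n+1) ω * ψ (ω (n+1))
          = Φ (n+1) ω * χ (ω (n+1)) + Φ (n+2) ω * v ((ω (n+1)).1) := by
        intro ω
        have hsucc : Φ (n+2) ω = Φ (n+1) ω * η (ω (n+1)) := Finset.prod_range_succ _ _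
        rw [hψ]
        simp only []
        rw [mul_add, hsucc, mul_assoc]
      rw [lintegral_congr hpt,
        lintegral_add_left (show Measurable fun ω : ℕ → S × ℝ => Φ (n+1) ω * χ (ω (n+1)) from
          (hΦm (n+1)).mul (hχm.comp (measurable_pi_apply (n+1)))) _]
    have hrhs : (∫⁻ ω, Φ (n+1) ω * ∫⁻ y, ψ y ∂(stepM q (ω n).1) ∂(P i)) ≤ R n := by
      refine lintegral_mono fun ω => ?_
      by_cases hzn : (ω n).1 = z
      · have : Φ (n+1) ω = 0 := by
          refine Finset.prod_eq_zero (Finset.self_mem_range_succ n) ?_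
          simp [hη, hzn]
        simp [this]
      · exact mul_le_mul_right (hTψ _ hzn) _
    calc a (n+1) + R (n+1) = ∫⁻ ω, Φ (n+1) ω * ψ (ω (n+1)) ∂(P i) := hlhs.symm
      _ = ∫⁻ ω, Φ (n+1) ω * ∫⁻ y, ψ y ∂(stepM q (ω n).1) ∂(P i) := hmk
      _ ≤ R n := hrhs
  -- initial values
  have ha0 : a 0 = 0 := by
    have hpt : ∀ ω : ℕ → S × ℝ, Φ 0 ω * χ (ω 0) = χ (ω 0) := by
      intro ω; simp [hΦ]
    rw [ha]
    simp only [hpt]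
    rw [← lintegral_map hχm (measurable_pi_apply 0), hP.2.1 i,
      initM_lintegral q i hχm]
    have : ∀ t : ℝ, χ ((i : S), t) = 0 := by intro t; simp [hχ, hi]
    simp only [this]
    simp
  have hR0 : R 0 ≤ u i := by
    have hpt : ∀ ω : ℕ → S × ℝ, Φ 1 ω * v ((ω 0).1) = η (ω 0) * v ((ω 0).1) := by
      intro ω; simp [hΦ]
    have hfm : Measurable fun y : S × ℝ => η y * v y.1 := hηm.mul hvm
    have hmap : ∫⁻ ω : ℕ → S × ℝ, η (ω 0) * v ((ω 0).1) ∂(P i)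
        = ∫⁻ y, η y * v y.1 ∂((P i).map (fun ω => ω 0)) :=
      (lintegral_map hfm (measurable_pi_apply 0)).symm
    rw [hR]
    simp only [hpt]
    rw [hmap, hP.2.1 i, initM_lintegral q i hfm]
    have hpt2 : ∀ t : ℝ, η ((i : S), t) * v i
        = ENNReal.ofReal (Real.exp (lam * (c i - g) * t)) * v i := by
      intro t; simp [hη, hi]
    simp only [hpt2]
    rw [lintegral_mul_const _ (by fun_prop), hexpQ i]
    exact hQB i hi
  -- partial sums
  have hsumR : ∀ M : ℕ, (∑ n ∈ Finset.range (M+1), a n) + R M ≤ R 0 := by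
    intro M
    induction M with
    | zero => simp [ha0]
    | succ M ih =>
      calc (∑ n ∈ Finset.range (M+2), a n) + R (M+1)
          = (∑ n ∈ Finset.range (M+1), a n) + (a (M+1) + R (M+1)) := by
            rw [Finset.sum_range_succ]; ring
        _ ≤ (∑ n ∈ Finset.range (M+1), a n) + R M := add_le_add_right (hstep M) _
        _ ≤ R 0 := ih
  have hsum : ∀ M : ℕ, (∑ n ∈ Finset.range M, a n) ≤ u i := by
    intro M
    rcases M with _ | M
    · simp
    · exact le_trans (le_trans (le_add_right le_rfl) (hsumR M)) hR0
  -- identify the integrand with a tsum, a.e.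
  have hA : ∀ᵐ ω ∂(P i), (ω 0).1 ≠ z := by
    rw [ae_iff]
    have : {ω : ℕ → S × ℝ | ¬ (ω 0).1 ≠ z} = (fun ω : ℕ → S × ℝ => ω 0) ⁻¹' {y | y.1 = z} := by
      ext ω; simp
    have h2 : (Measure.map (fun t : ℝ => ((i : S), t)) (expM (-(q i i)))) {y : S × ℝ | y.1 = z}
        = (expM (-(q i i))) ((fun t : ℝ => ((i : S), t)) ⁻¹' {y : S × ℝ | y.1 = z}) :=
      Measure.map_apply (measurable_const.prodMk measurable_id) hSz
    rw [this, ← Measure.map_apply (measurable_pi_apply 0) hSz, hP.2.1 i, initM, h2]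
    have : ((fun t : ℝ => ((i : S), t)) ⁻¹' {y | y.1 = z}) = ∅ := by
      ext t; simp [hi]
    rw [this]
    simp
  have hΦexp : ∀ (ω : ℕ → S × ℝ) (n : ℕ), (∀ m < n, (ω m).1 ≠ z) →
      Φ n ω = ENNReal.ofReal (Real.exp (lam *
        ∑ m ∈ Finset.range n, (c (ω m).1 - g) * (ω m).2)) := by
    intro ω n
    induction n with
    | zero => intro _; simp [hΦ]
    | succ n ih =>
      intro h
      have h1 : Φ (n+1) ω = Φ n ω * η (ω n) := Finset.prod_range_succ _ _
      rw [h1, ih (fun m hm => h m (hm.trans (Nat.lt_succ_self n)))]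
      have h2 : η (ω n) = ENNReal.ofReal (Real.exp (lam * ((c (ω n).1 - g) * (ω n).2))) := by
        rw [hη]
        simp only [if_neg (h n (Nat.lt_succ_self n))]
        rw [mul_assoc]
      rw [h2, ← ENNReal.ofReal_mul (Real.exp_pos _).le, ← Real.exp_add,
        Finset.sum_range_succ, mul_add]
  have hptwise : ∀ ω : ℕ → S × ℝ, (ω 0).1 ≠ z →
      {ω' : ℕ → S × ℝ | ∃ m, 1 ≤ m ∧ (ω' m).1 = z}.indicator (W z lam c g) ω
        = ∑' n, Φ n ω * χ (ω n) := by
    intro ω hω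
    by_cases h : ∃ m, 1 ≤ m ∧ (ω m).1 = z
    · rw [Set.indicator_of_mem (show ω ∈ {ω' : ℕ → S × ℝ | ∃ m, 1 ≤ m ∧ (ω' m).1 = z} from h)]
      have hW : W z lam c g ω = ENNReal.ofReal (Real.exp (lam *
          ∑ m ∈ Finset.range (Nat.find h), (c (ω m).1 - g) * (ω m).2)) := by
        rw [W, dif_pos h]
      rw [hW, tsum_eq_single (Nat.find h) ?_]
      · have hz : (ω (Nat.find h)).1 = z := (Nat.find_spec h).2
        have hne : ∀ m < Nat.find h, (ω m).1 ≠ z := by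
          intro m hm
          rcases Nat.eq_zero_or_pos m with rfl | hm1
          · exact hω
          · intro hc
            exact (Nat.find_min h hm) ⟨hm1, hc⟩
        rw [hΦexp ω (Nat.find h) hne, hχ]
        simp [hz]
      · intro n hn
        by_cases hzn : (ω n).1 = z
        · have hn0 : 1 ≤ n := by
            rcases Nat.eq_zero_or_pos n with rfl | h1
            · exact absurd hzn hω
            · exact h1
          have hfind : Nat.find h ≤ n := Nat.find_min' h ⟨hn0, hzn⟩
          have hlt : Nat.find h < n := lt_of_le_of_ne hfind (Ne.symm hn)
          have : Φ n ω = 0 := by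
            refine Finset.prod_eq_zero (Finset.mem_range.2 hlt) ?_
            simp [hη, (Nat.find_spec h).2]
          simp [this]
        · simp [hχ, hzn]
    · rw [Set.indicator_of_notMem (show ω ∉ {ω' : ℕ → S × ℝ | ∃ m, 1 ≤ m ∧ (ω' m).1 = z} from h)]
      have : ∀ n, Φ n ω * χ (ω n) = 0 := by
        intro n
        have hzn : (ω n).1 ≠ z := by
          rcases Nat.eq_zero_or_pos n with rfl | h1
          · exact hω
          · intro hc; exact h ⟨n, h1, hc⟩
        simp [hχ, hzn]
      simp [this]
  calc (∫⁻ ω, {ω' : ℕ → S × ℝ | ∃ m, 1 ≤ m ∧ (ω' m).1 = z}.indicator (W z lam c g) ω ∂(P i))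
      = ∫⁻ ω, ∑' n, Φ n ω * χ (ω n) ∂(P i) :=
        lintegral_congr_ae (hA.mono fun ω hω => hptwise ω hω)
    _ = ∑' n, a n := by
        rw [lintegral_tsum (f := fun n (ω : ℕ → S × ℝ) => Φ n ω * χ (ω n)) fun n =>
          ((hΦm n).mul (hχm.comp (measurable_pi_apply n))).aemeasurable]
    _ ≤ u i := by
        rw [ENNReal.tsum_eq_iSup_sum]
        refine iSup_le fun s => ?_
        obtain ⟨M, hM⟩ := s.exists_nat_subset_range
        exact le_trans (Finset.sum_le_sum_of_subset hM) (hsum M)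

end RiskCTMDP10
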